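/- arXiv:1309.3193 — 6 statements merged into one kernel-verified Lean document; each statement's English description precedes it below -/
import Mathlib

section
/- Let S be a finite set of points (stations) in ℝ^d, let P > 0 be a common transmission power, N ≥ 0 the noise, α > 0 the path-loss exponent, and β ≥ 1 the threshold. If a point p ∉ S satisfies SINR(s_i, p) = (P · d(s_i,p)^{-α}) / (Σ_{j≠i} P · d(s_j,p)^{-α} + N) ≥ β, then d(s_i, p) ≤ d(s_j, p) for every s_j ∈ S; i.e., the reception zone of s_i is contained in the Voronoi cell of s_i. -/
open Finset

/-- Uniform-power reception zones are contained in Voronoi cells: if `p ∉ S` and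
`SINR(s i, p) ≥ β` with `β ≥ 1`, then `s i` is a closest station to `p`. -/
theorem stmt0 {d n : ℕ} (hn : 2 ≤ n) (s : Fin n → EuclideanSpace ℝ (Fin d))
    (hinj : Function.Injective s) (P N α β : ℝ) (hP : 0 < P) (hN : 0 ≤ N)
    (hα : 0 < α) (hβ : 1 ≤ β) (p : EuclideanSpace ℝ (Fin d))
    (hp : ∀ j, p ≠ s j) (i : Fin n)
    (hsinr : β ≤ P * dist (s i) p ^ (-α) /
      ((∑ j ∈ Finset.univ.filter (fun j => j ≠ i), P * dist (s j) p ^ (-α)) + N)) :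
    ∀ j, dist (s i) p ≤ dist (s j) p := by
  intro j
  rcases eq_or_ne j i with rfl | hji
  · exact le_refl _
  have hdist : ∀ k, 0 < dist (s k) p := fun k =>
    dist_pos.mpr fun h => hp k h.symm
  have hterm : ∀ k, 0 < P * dist (s k) p ^ (-α) := fun k =>
    mul_pos hP (Real.rpow_pos_of_pos (hdist k) _)
  set T := ∑ k ∈ Finset.univ.filter (fun k => k ≠ i), P * dist (s k) p ^ (-α) with hT
  have hjmem : j ∈ Finset.univ.filter (fun k => k ≠ i) := by simp [hji]
  have hjle : P * dist (s j) p ^ (-α) ≤ T :=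
    Finset.single_le_sum (fun k _ => (hterm k).le) hjmem
  have hTpos : 0 < T :=
    Finset.sum_pos (fun k _ => hterm k) ⟨j, hjmem⟩
  have hD : 0 < T + N := by linarith
  have key : T + N ≤ P * dist (s i) p ^ (-α) := by
    have := (le_div_iff₀ hD).mp hsinr
    nlinarith
  have h2 : P * dist (s j) p ^ (-α) ≤ P * dist (s i) p ^ (-α) := by linarith
  have h3 : dist (s j) p ^ (-α) ≤ dist (s i) p ^ (-α) :=
    le_of_mul_le_mul_left h2 hP
  exact (Real.rpow_le_rpow_iff_of_neg (hdist j) (hdist i) (neg_neg_of_pos hα)).mp h3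
end

section
/- Separation of ordered Voronoi regions: let S ⊂ ℝ^d be finite and let (s_{i_1},…,s_{i_k}), (s_{j_1},…,s_{j_m}) be two ordered tuples of distinct points of S with k ≤ m such that the first tuple is not a prefix of the second. Then there exist two points s, s' ∈ S such that the bisector hyperplane HP(s,s') = {p : d(p,s) = d(p,s')} separates the two ordered Voronoi regions: one region lies in {p : d(p,s) ≤ d(p,s')} and the other in {p : d(p,s') ≤ d(p,s)}. In particular, the interiors of the two regions are disjoint. -/
open scoped RealInnerProductSpace


lemma bisector_interior_empty {E : Type*} [NormedAddCommGroup E] [InnerProductSpace ℝ E]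
    {a b : E} (hab : a ≠ b) : interior {p : E | dist p a = dist p b} = ∅ := by
  by_contra h
  obtain ⟨x, hx⟩ := Set.nonempty_iff_ne_empty.2 h
  obtain ⟨ε, hε, hball⟩ := Metric.isOpen_iff.1 isOpen_interior x hx
  have hab' : (0:ℝ) < ‖a - b‖ := by
    rw [norm_pos_iff]; exact sub_ne_zero.2 hab
  set δ : ℝ := ε / (2 * ‖a - b‖) with hδdef
  have hδ : 0 < δ := by positivity
  set y : E := x + δ • (a - b) with hy
  have hyx : dist y x = δ * ‖a - b‖ := by
    simp [hy, dist_eq_norm, norm_smul, abs_of_pos hδ]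
  have hymem : y ∈ Metric.ball x ε := by
    rw [Metric.mem_ball, hyx, hδdef]
    rw [div_mul_eq_mul_div, mul_comm]
    rw [div_lt_iff₀ (by positivity)]
    nlinarith
  have hxs : x ∈ {p : E | dist p a = dist p b} := interior_subset hx
  have hys : y ∈ {p : E | dist p a = dist p b} := interior_subset (hball hymem)
  have e1 : ‖y - a‖ = ‖y - b‖ := by simpa [dist_eq_norm] using hys
  have e0 : ‖x - a‖ = ‖x - b‖ := by simpa [dist_eq_norm] using hxs
  have sq1 : ‖y - a‖ ^ 2 = ‖y - b‖ ^ 2 := by rw [e1]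
  have sq0 : ‖x - a‖ ^ 2 = ‖x - b‖ ^ 2 := by rw [e0]
  have expa : ‖y - a‖ ^ 2 = ‖x - a‖ ^ 2 + 2 * δ * ⟪x - a, a - b⟫ + δ ^ 2 * ‖a - b‖ ^ 2 := by
    have : y - a = (x - a) + δ • (a - b) := by rw [hy]; abel
    rw [this, @norm_add_sq_real, inner_smul_right, norm_smul, mul_pow, Real.norm_eq_abs, sq_abs]
    ring
  have expb : ‖y - b‖ ^ 2 = ‖x - b‖ ^ 2 + 2 * δ * ⟪x - b, a - b⟫ + δ ^ 2 * ‖a - b‖ ^ 2 := by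
    have : y - b = (x - b) + δ • (a - b) := by rw [hy]; abel
    rw [this, @norm_add_sq_real, inner_smul_right, norm_smul, mul_pow, Real.norm_eq_abs, sq_abs]
    ring
  have key : ⟪x - a, a - b⟫ = ⟪x - b, a - b⟫ := by
    have h2 : 2 * δ * ⟪x - a, a - b⟫ = 2 * δ * ⟪x - b, a - b⟫ := by
      have := sq1
      rw [expa, expb, sq0] at this
      linarith
    exact mul_left_cancel₀ (by positivity) h2
  have : ⟪(x - a) - (x - b), a - b⟫ = 0 := by
    rw [inner_sub_left, key]; ring
  have hba : (x - a) - (x - b) = b - a := by abel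
  rw [hba] at this
  have : -(‖a - b‖ ^ 2) = 0 := by
    rw [← real_inner_self_eq_norm_sq, ← inner_neg_left]
    simpa [neg_sub] using this
  nlinarith



/-- The ordered order-k Voronoi region of a tuple `s` with respect to `S`. -/
def vorOrd {d k : ℕ} (S : Finset (EuclideanSpace ℝ (Fin d)))
    (s : Fin (k + 1) → EuclideanSpace ℝ (Fin d)) : Set (EuclideanSpace ℝ (Fin d)) :=
  {p | (∀ j : Fin k, dist p (s j.castSucc) ≤ dist p (s j.succ)) ∧
    ∀ t ∈ S, t ∉ Set.range s → dist p (s (Fin.last k)) ≤ dist p t}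

lemma vorOrd_mono {d k : ℕ} {S : Finset (EuclideanSpace ℝ (Fin d))}
    {s : Fin (k + 1) → EuclideanSpace ℝ (Fin d)} {p : EuclideanSpace ℝ (Fin d)}
    (hp : p ∈ vorOrd S s) : Monotone (fun i => dist p (s i)) :=
  Fin.monotone_iff_le_succ.2 hp.1

/-- Separation of ordered Voronoi regions: if `(s_0,…,s_k)` is not a prefix of
`(t_0,…,t_m)` (with `k ≤ m`), then some bisector hyperplane of two distinct points of
`S` separates the two ordered Voronoi regions; in particular their interiors are
disjoint. -/
theorem stmt6 {d k m : ℕ} (S : Finset (EuclideanSpace ℝ (Fin d)))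
    (s : Fin (k + 1) → EuclideanSpace ℝ (Fin d))
    (t : Fin (m + 1) → EuclideanSpace ℝ (Fin d)) (hkm : k ≤ m)
    (hsm : ∀ j, s j ∈ S) (htm : ∀ j, t j ∈ S)
    (hsi : Function.Injective s) (hti : Function.Injective t)
    (hpre : ¬ ∀ j : Fin (k + 1), s j = t (Fin.castLE (Nat.succ_le_succ hkm) j)) :
    ∃ a ∈ S, ∃ b ∈ S, a ≠ b ∧
      vorOrd S s ⊆ {p | dist p a ≤ dist p b} ∧
      vorOrd S t ⊆ {p | dist p b ≤ dist p a} ∧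
      interior (vorOrd S s) ∩ interior (vorOrd S t) = ∅ := by
  push_neg at hpre
  obtain ⟨j, hj⟩ := hpre
  -- find the minimal such index
  have hQ : ∃ n : ℕ, ∃ hn : n < k + 1,
      s ⟨n, hn⟩ ≠ t (Fin.castLE (Nat.succ_le_succ hkm) ⟨n, hn⟩) := ⟨j.1, j.2, by simpa using hj⟩
  classical
  set n₀ := Nat.find hQ with hn₀
  obtain ⟨hn₀lt, hne⟩ := Nat.find_spec hQ
  set j₀ : Fin (k + 1) := ⟨n₀, hn₀lt⟩ with hj₀
  have hmin : ∀ l : Fin (k + 1), l < j₀ → s l = t (Fin.castLE (Nat.succ_le_succ hkm) l) := by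
    intro l hl
    have := Nat.find_min hQ (m := l.1) (Fin.lt_def.1 hl)
    push_neg at this
    simpa using this l.2
  set a := s j₀ with ha
  set b := t (Fin.castLE (Nat.succ_le_succ hkm) j₀) with hb
  have hab : a ≠ b := hne
  have incl1 : vorOrd S s ⊆ {p | dist p a ≤ dist p b} := by
    intro p hp
    by_cases hbr : b ∈ Set.range s
    · obtain ⟨l, hl⟩ := hbr
      have hj₀l : j₀ ≤ l := by
        by_contra h
        push_neg at h
        have := hmin l h
        have : Fin.castLE (Nat.succ_le_succ hkm) l = Fin.castLE (Nat.succ_le_succ hkm) j₀ :=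
          hti (by rw [← this, hl])
        exact absurd (Fin.castLE_injective _ this) (ne_of_lt h)
      calc dist p a ≤ dist p (s l) := vorOrd_mono hp hj₀l
        _ = dist p b := by rw [hl]
    · calc dist p a ≤ dist p (s (Fin.last k)) := vorOrd_mono hp (Fin.le_last _)
        _ ≤ dist p b := hp.2 b (htm _) hbr
  have incl2 : vorOrd S t ⊆ {p | dist p b ≤ dist p a} := by
    intro p hp
    by_cases har : a ∈ Set.range t
    · obtain ⟨l, hl⟩ := har
      have hj₀l : Fin.castLE (Nat.succ_le_succ hkm) j₀ ≤ l := by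
        by_contra h
        push_neg at h
        have hlv : l.1 < k + 1 := Nat.lt_trans (Fin.lt_def.1 h) hn₀lt
        set l' : Fin (k + 1) := ⟨l.1, hlv⟩ with hl'
        have hl'lt : l' < j₀ := h
        have hcast : Fin.castLE (Nat.succ_le_succ hkm) l' = l := by
          ext; rfl
        have : s l' = a := by rw [hmin l' hl'lt, hcast, hl]
        exact absurd (hsi this) (ne_of_lt hl'lt)
      calc dist p b ≤ dist p (t l) := vorOrd_mono hp hj₀l
        _ = dist p a := by rw [hl]
    · calc dist p b ≤ dist p (t (Fin.last m)) := vorOrd_mono hp (Fin.le_last _)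
        _ ≤ dist p a := hp.2 a (hsm _) har
  refine ⟨a, hsm _, b, htm _, hab, incl1, incl2, ?_⟩
  have hsub : interior (vorOrd S s) ∩ interior (vorOrd S t) ⊆ {p | dist p a = dist p b} := by
    intro x hx
    exact le_antisymm (incl1 (interior_subset hx.1)) (incl2 (interior_subset hx.2))
  have hopen : IsOpen (interior (vorOrd S s) ∩ interior (vorOrd S t)) :=
    isOpen_interior.inter isOpen_interior
  have := interior_maximal hsub hopen
  rw [bisector_interior_empty hab] at this
  exact Set.subset_empty_iff.1 this
end

section
/- SIC reception regions are contained in ordered Voronoi regions: with uniform powers, β ≥ 1, and noise N ≥ 0, the region H(s_{i_1},…,s_{i_k}) of points that successfully decode s_{i_k} after successively canceling s_{i_1},…,s_{i_{k−1}} (i.e., points p such that for each j ≤ k, SINR of s_{i_j} at p in the network restricted to S ∖ {s_{i_1},…,s_{i_{j−1}}} is at least β) is contained in the ordered order-k Voronoi region Vor(s_{i_1},…,s_{i_k}). -/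
open Finset
open scoped Classical

/-- SIC reception regions are contained in ordered Voronoi regions: with uniform
powers, `β ≥ 1` and noise `N ≥ 0`, a point `p ∉ S` that successively decodes
`s 0, …, s k` (each time with SINR at least `β` in the network restricted to the
not-yet-cancelled stations) lies in the ordered order-k Voronoi region of the tuple. -/
theorem stmt7 {d k : ℕ} (S : Finset (EuclideanSpace ℝ (Fin d)))
    (s : Fin (k + 1) → EuclideanSpace ℝ (Fin d)) (hmem : ∀ j, s j ∈ S)
    (hinj : Function.Injective s) (N α β : ℝ) (hN : 0 ≤ N) (hα : 0 < α) (hβ : 1 ≤ β)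
    (p : EuclideanSpace ℝ (Fin d)) (hp : p ∉ (S : Set (EuclideanSpace ℝ (Fin d))))
    (hdec : ∀ j : Fin (k + 1), β ≤ dist (s j) p ^ (-α) /
      ((∑ u ∈ (S.filter fun u => ∀ l, l < j → u ≠ s l).erase (s j),
        dist u p ^ (-α)) + N)) :
    (∀ j : Fin k, dist p (s j.castSucc) ≤ dist p (s j.succ)) ∧
    ∀ t ∈ S, t ∉ Set.range s → dist p (s (Fin.last k)) ≤ dist p t := by
  have key : ∀ j : Fin (k + 1), ∀ u ∈ (S.filter fun u => ∀ l, l < j → u ≠ s l).erase (s j),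
      dist p (s j) ≤ dist p u := by
    intro j u hu
    have hβ' := hdec j
    set B := (∑ u ∈ (S.filter fun u => ∀ l, l < j → u ≠ s l).erase (s j),
      dist u p ^ (-α)) + N with hB
    have hBnonneg : 0 ≤ B :=
      add_nonneg (Finset.sum_nonneg fun v _ => Real.rpow_nonneg dist_nonneg _) hN
    have hBpos : 0 < B := by
      rcases hBnonneg.lt_or_eq with h | h
      · exact h
      · exfalso; rw [← h, div_zero] at hβ'; linarith
    have h1 : B ≤ dist (s j) p ^ (-α) := by
      have h2 := (le_div_iff₀ hBpos).mp hβ'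
      nlinarith
    have hterm : dist u p ^ (-α) ≤ B := by
      have h3 : dist u p ^ (-α) ≤ ∑ v ∈ (S.filter fun u => ∀ l, l < j → u ≠ s l).erase (s j),
          dist v p ^ (-α) :=
        Finset.single_le_sum (f := fun v => dist v p ^ (-α)) (fun v _ => Real.rpow_nonneg dist_nonneg _) hu
      rw [hB]; linarith
    have huS : u ∈ S := (Finset.mem_filter.mp (Finset.mem_of_mem_erase hu)).1
    have hup : 0 < dist u p := by
      rw [dist_pos]; intro h; exact hp (by rw [← h]; exact huS)
    have hsp : 0 < dist (s j) p := by
      rw [dist_pos]; intro h; exact hp (by rw [← h]; exact hmem j)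
    have := (Real.rpow_le_rpow_iff_of_neg hup hsp (neg_lt_zero.mpr hα)).mp
      (hterm.trans h1)
    rw [dist_comm p (s j), dist_comm p u]; exact this
  constructor
  · intro j
    apply key j.castSucc
    refine Finset.mem_erase.mpr ⟨fun h => ?_, Finset.mem_filter.mpr ⟨hmem _, ?_⟩⟩
    · exact absurd (hinj h) (@Fin.castSucc_lt_succ _ j).ne'
    · intro l hl h
      have he := hinj h
      rw [← he] at hl
      exact absurd hl (lt_asymm (@Fin.castSucc_lt_succ _ j))
  · intro t htS htr
    apply key (Fin.last k)
    refine Finset.mem_erase.mpr ⟨fun h => htr ⟨_, h.symm⟩,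
      Finset.mem_filter.mpr ⟨htS, fun l _ h => htr ⟨l, h.symm⟩⟩⟩
end

section
/- Compactness gap: with uniform powers, β > 1, noise N ≥ 0, and path-loss α > 0, if a point p can decode station s_i under successive interference cancellation and s_j is a station farther from p than s_i that was not canceled before s_i, then d(s_j, p) ≥ β^{1/α} · d(s_i, p). -/
open Finset

/-- Compactness gap: with uniform powers, `β > 1`, noise `N ≥ 0` and path loss
`α > 0`, if point `p` decodes station `sᵢ` against an interference set `T`
containing the farther, not-yet-cancelled station `sⱼ`, then
`dist sⱼ p ≥ β^(1/α) · dist sᵢ p`. -/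
theorem stmt8 {d : ℕ} (N α β : ℝ) (hN : 0 ≤ N) (hα : 0 < α) (hβ : 1 < β)
    (T : Finset (EuclideanSpace ℝ (Fin d))) (si sj p : EuclideanSpace ℝ (Fin d))
    (hsiT : si ∉ T) (hsjT : sj ∈ T) (hpi : 0 < dist si p)
    (hfar : dist si p < dist sj p)
    (hsinr : β ≤ dist si p ^ (-α) / ((∑ t ∈ T, dist t p ^ (-α)) + N)) :
    β ^ (1 / α) * dist si p ≤ dist sj p := by
  set a := dist si p with ha
  set b := dist sj p with hb
  have hbpos : 0 < b := hpi.trans hfar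
  have hbrpow : 0 < b ^ (-α) := Real.rpow_pos_of_pos hbpos _
  have hsum : b ^ (-α) ≤ ∑ t ∈ T, dist t p ^ (-α) :=
    Finset.single_le_sum (f := fun t => dist t p ^ (-α)) (fun t _ => by positivity) hsjT
  have hden : 0 < (∑ t ∈ T, dist t p ^ (-α)) + N := by linarith
  have h1 : β * ((∑ t ∈ T, dist t p ^ (-α)) + N) ≤ a ^ (-α) := by
    rw [le_div_iff₀ hden] at hsinr; linarith
  have h2 : β * b ^ (-α) ≤ a ^ (-α) := by
    have : b ^ (-α) ≤ (∑ t ∈ T, dist t p ^ (-α)) + N := by linarith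
    nlinarith [hβ.le]
  have h3 : β ≤ (b / a) ^ α := by
    rw [Real.rpow_neg hbpos.le, Real.rpow_neg hpi.le] at h2
    have hbα : 0 < b ^ α := Real.rpow_pos_of_pos hbpos _
    have haα : 0 < a ^ α := Real.rpow_pos_of_pos hpi _
    have hA : β * (b ^ α)⁻¹ * b ^ α ≤ (a ^ α)⁻¹ * b ^ α :=
      mul_le_mul_of_nonneg_right h2 hbα.le
    rw [mul_assoc, inv_mul_cancel₀ hbα.ne', mul_one] at hA
    have hB := mul_le_mul_of_nonneg_right hA haα.le
    rw [mul_comm ((a ^ α)⁻¹) (b ^ α), mul_assoc, inv_mul_cancel₀ haα.ne',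
      mul_one] at hB
    rw [Real.div_rpow hbpos.le hpi.le, le_div_iff₀ haα]
    exact hB
  have h4 : β ^ (1 / α) ≤ ((b / a) ^ α) ^ (1 / α) :=
    Real.rpow_le_rpow (by linarith) h3 (by positivity)
  rw [← Real.rpow_mul (by positivity) α (1/α), mul_one_div, div_self hα.ne',
    Real.rpow_one] at h4
  calc β ^ (1 / α) * a ≤ (b / a) * a := mul_le_mul_of_nonneg_right h4 hpi.le
    _ = b := by field_simp
end

section
/- Arithmetic core of the one-cell-per-contributor lemma: let C ≥ 4.2 and c_2, c_3 ≥ C be real numbers. Suppose points s*_1, s*_2, s*_3, p, q in a metric space satisfy d(s*_1,p) = 1, d(s*_2,p) = c_2, d(s*_3,p) = c_2·c_3, and d(s*_3,q) < d(s*_2,q). Then d(s*_2,q)/d(s*_1,q) < C, i.e., q is at distance from s*_2 less than C times its distance from s*_1. -/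
/-- Arithmetic core of the one-cell-per-contributor lemma: for `C ≥ 4.2`,
`c₂, c₃ ≥ C`, and points with `d(s₁*,p) = 1`, `d(s₂*,p) = c₂`, `d(s₃*,p) = c₂·c₃`,
if `d(s₃*,q) < d(s₂*,q)` then `d(s₂*,q)/d(s₁*,q) < C`. -/
theorem stmt9 {X : Type*} [MetricSpace X] (C c₂ c₃ : ℝ)
    (hC : (4.2 : ℝ) ≤ C) (h₂ : C ≤ c₂) (h₃ : C ≤ c₃)
    (s₁ s₂ s₃ p q : X)
    (h1p : dist s₁ p = 1) (h2p : dist s₂ p = c₂) (h3p : dist s₃ p = c₂ * c₃)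
    (hq : dist s₃ q < dist s₂ q) :
    dist s₂ q / dist s₁ q < C := by
  have t1 : dist p q ≤ dist p s₁ + dist s₁ q := dist_triangle p s₁ q
  have hps1 : dist p s₁ = 1 := by rw [dist_comm]; exact h1p
  have h1 : dist s₁ q ≥ dist p q - 1 := by linarith
  have t2 : dist s₂ q ≤ dist s₂ p + dist p q := dist_triangle s₂ p q
  have h2 : dist s₂ q ≤ c₂ + dist p q := by linarith [t2, h2p.le, h2p.ge]
  have t3 : dist s₃ p ≤ dist s₃ q + dist q p := dist_triangle s₃ q p
  have hqp : dist q p = dist p q := dist_comm q p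
  have h3 : dist s₃ q ≥ c₂ * c₃ - dist p q := by
    rw [hqp] at t3; linarith [h3p.ge]
  have hd : dist p q > (c₂ * c₃ - c₂) / 2 := by linarith
  have hpos : dist s₁ q > 0 := by nlinarith
  rw [div_lt_iff₀ hpos]
  nlinarith [sq_nonneg (C - 1), sq_nonneg c₂, mul_le_mul h₂ h₃ (by linarith) (by linarith : (0:ℝ) ≤ c₂)]
end

section
/- Disjointness of SIC cells via Voronoi separation: let (s_{i_1},…,s_{i_k}) and (s_{j_1},…,s_{j_m}) be two distinct ordered tuples of distinct stations, neither a prefix of the other, both ending with the same station s_1, in a uniform-power network with β ≥ 1. Then the corresponding SIC reception regions H(s_{i_1},…,s_{i_k}) and H(s_{j_1},…,s_{j_m}) are disjoint. -/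
open Finset
open scoped Classical

/-- The SIC reception region of an ordered cancellation tuple `s` within station set
`S`: points outside `S` that successively decode `s 0, …, s k`, each time with SINR at
least `β` in the network restricted to the not-yet-cancelled stations. -/
noncomputable def sicRegion {d k : ℕ} (S : Finset (EuclideanSpace ℝ (Fin d)))
    (s : Fin (k + 1) → EuclideanSpace ℝ (Fin d)) (N α β : ℝ) :
    Set (EuclideanSpace ℝ (Fin d)) :=
  {p | p ∉ (S : Set (EuclideanSpace ℝ (Fin d))) ∧ ∀ j : Fin (k + 1),
    β ≤ dist (s j) p ^ (-α) /
      ((∑ u ∈ (S.filter fun u => ∀ l, l < j → u ≠ s l).erase (s j),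
        dist u p ^ (-α)) + N)}

private lemma key_ineq {β num den : ℝ} (hβ : 1 ≤ β) (hnum : 0 ≤ num)
    (h : β ≤ num / den) : 0 < den ∧ den ≤ num := by
  rcases lt_or_ge 0 den with hd | hd
  · refine ⟨hd, ?_⟩
    have h2 : β * den ≤ num := (le_div_iff₀ hd).mp h
    nlinarith
  · have h2 : num / den ≤ 0 := div_nonpos_iff.mpr (Or.inl ⟨hnum, hd⟩)
    linarith

private lemma sic_aux {d k m : ℕ} (S : Finset (EuclideanSpace ℝ (Fin d)))
    (s : Fin (k + 1) → EuclideanSpace ℝ (Fin d))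
    (t : Fin (m + 1) → EuclideanSpace ℝ (Fin d))
    (hsm : ∀ j, s j ∈ S) (htm : ∀ j, t j ∈ S)
    (hsi : Function.Injective s) (hti : Function.Injective t)
    (hlast : s (Fin.last k) = t (Fin.last m))
    (hkm : k ≤ m)
    (hnp : ∃ j : Fin (k + 1), s j ≠ t (Fin.castLE (Nat.succ_le_succ hkm) j))
    {N α β : ℝ} (hN : 0 ≤ N) (hα : 0 < α) (hβ : 1 ≤ β)
    (p : EuclideanSpace ℝ (Fin d))
    (hp₁ : p ∈ sicRegion S s N α β) (hp₂ : p ∈ sicRegion S t N α β) : False := by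
  obtain ⟨hpS, hs⟩ := hp₁
  obtain ⟨-, ht⟩ := hp₂
  have hpos : ∀ u ∈ S, 0 < dist u p ^ (-α) := by
    intro u hu
    refine Real.rpow_pos_of_pos (dist_pos.mpr ?_) _
    rintro rfl
    exact hpS (Finset.mem_coe.mpr hu)
  -- the first index where the tuples differ
  have hQ : ∃ n : ℕ, ∃ hn : n < k + 1,
      s ⟨n, hn⟩ ≠ t ⟨n, hn.trans_le (Nat.succ_le_succ hkm)⟩ := by
    obtain ⟨j0, hj0⟩ := hnp
    exact ⟨j0.1, j0.2, by simpa [Fin.castLE] using hj0⟩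
  obtain ⟨hjk, hab⟩ := Nat.find_spec hQ
  set j := Nat.find hQ with hjdef
  have hmin : ∀ n (hn : n < k + 1), n < j →
      s ⟨n, hn⟩ = t ⟨n, hn.trans_le (Nat.succ_le_succ hkm)⟩ := by
    intro n hn hnj
    by_contra hne
    exact Nat.find_min hQ hnj ⟨hn, hne⟩
  have hjK : j ≤ k := Nat.lt_succ_iff.mp hjk
  have hjm : j ≤ m := hjK.trans hkm
  set jF : Fin (k + 1) := ⟨j, hjk⟩ with hjF
  set jG : Fin (m + 1) := ⟨j, Nat.lt_succ_of_le hjm⟩ with hjG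
  have hab' : s jF ≠ t jG := hab
  -- agreement before j
  have hagree : ∀ l : Fin (k + 1), l < jF →
      s l = t ⟨l.1, Nat.lt_succ_of_le ((Nat.lt_succ_iff.mp l.2).trans hkm)⟩ := by
    intro l hl
    have := hmin l.1 l.2 (Fin.lt_def.mp hl)
    simpa using this
  -- membership facts at step j
  have hbFs : t jG ∈ (S.filter fun u => ∀ l, l < jF → u ≠ s l).erase (s jF) := by
    refine Finset.mem_erase.mpr ⟨fun h => hab' h.symm, Finset.mem_filter.mpr ⟨htm _, ?_⟩⟩
    intro l hl
    rw [hagree l hl]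
    intro hcon
    have h1 := congrArg Fin.val (hti hcon)
    have h2 : l.1 < j := Fin.lt_def.mp hl
    simp [hjG] at h1
    omega
  have haFt : s jF ∈ (S.filter fun u => ∀ l, l < jG → u ≠ t l).erase (t jG) := by
    refine Finset.mem_erase.mpr ⟨hab', Finset.mem_filter.mpr ⟨hsm _, ?_⟩⟩
    intro l hl
    have hl1 : l.1 < j := Fin.lt_def.mp hl
    have hl2 : l.1 < k + 1 := by omega
    have heq : t l = s ⟨l.1, hl2⟩ := by
      have := hmin l.1 hl2 hl1
      rw [this]
    rw [heq]
    intro hcon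
    have h1 := congrArg Fin.val (hsi hcon)
    simp [hjF] at h1
    omega
  -- SINR inequalities at step j
  obtain ⟨hden₁, hle₁⟩ := key_ineq hβ (hpos _ (hsm jF)).le (hs jF)
  obtain ⟨hden₂, hle₂⟩ := key_ineq hβ (hpos _ (htm jG)).le (ht jG)
  have hterm_nonneg : ∀ (T : Finset (EuclideanSpace ℝ (Fin d))), T ⊆ S →
      ∀ u ∈ T, (0:ℝ) ≤ dist u p ^ (-α) := fun T hT u hu => (hpos u (hT hu)).le
  have hsubS₁ : (S.filter fun u => ∀ l, l < jF → u ≠ s l).erase (s jF) ⊆ S :=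
    (Finset.erase_subset _ _).trans (Finset.filter_subset _ _)
  have hsubS₂ : (S.filter fun u => ∀ l, l < jG → u ≠ t l).erase (t jG) ⊆ S :=
    (Finset.erase_subset _ _).trans (Finset.filter_subset _ _)
  have hB_le : dist (t jG) p ^ (-α) ≤
      ∑ u ∈ (S.filter fun u => ∀ l, l < jF → u ≠ s l).erase (s jF), dist u p ^ (-α) :=
    Finset.single_le_sum (hterm_nonneg _ hsubS₁) hbFs
  have hA_le : dist (s jF) p ^ (-α) ≤
      ∑ u ∈ (S.filter fun u => ∀ l, l < jG → u ≠ t l).erase (t jG), dist u p ^ (-α) :=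
    Finset.single_le_sum (hterm_nonneg _ hsubS₂) haFt
  -- squeeze: everything is equal, N = 0
  have hN0 : N = 0 := by linarith
  have hsum_eq : (∑ u ∈ (S.filter fun u => ∀ l, l < jF → u ≠ s l).erase (s jF),
      dist u p ^ (-α)) = dist (t jG) p ^ (-α) := by linarith
  -- all other interferers vanish, hence Fs ⊆ {a, b}
  have hrest : (∑ u ∈ ((S.filter fun u => ∀ l, l < jF → u ≠ s l).erase (s jF)).erase (t jG),
      dist u p ^ (-α)) = 0 := by
    have h := Finset.sum_erase_add ((S.filter fun u => ∀ l, l < jF → u ≠ s l).erase (s jF))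
      (fun u => dist u p ^ (-α)) hbFs
    linarith
  have hFsub : ∀ u ∈ S.filter fun u => ∀ l, l < jF → u ≠ s l, u = s jF ∨ u = t jG := by
    intro u hu
    by_contra hcon
    push_neg at hcon
    have hmem : u ∈ ((S.filter fun u => ∀ l, l < jF → u ≠ s l).erase (s jF)).erase (t jG) :=
      Finset.mem_erase.mpr ⟨hcon.2, Finset.mem_erase.mpr ⟨hcon.1, hu⟩⟩
    have h1 : dist u p ^ (-α) ≤ 0 := by
      have := Finset.single_le_sum (fun v hv => hterm_nonneg _ hsubS₁ v
        (Finset.mem_of_mem_erase hv)) hmem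
      linarith [hrest]
    exact absurd (hpos u (Finset.mem_filter.mp hu).1) (by linarith)
  -- the common last station lies in the remaining set at step j
  have hwFs : s (Fin.last k) ∈ S.filter fun u => ∀ l, l < jF → u ≠ s l := by
    refine Finset.mem_filter.mpr ⟨hsm _, ?_⟩
    intro l hl hcon
    have h1 := congrArg Fin.val (hsi hcon)
    have h2 : l.1 < j := Fin.lt_def.mp hl
    simp [Fin.last] at h1
    omega
  rcases hFsub _ hwFs with hw | hw
  · -- s (last k) = s jF : impossible unless j = k; then j < m and step j+1 of t kills it
    have hjk' : k = j := by
      have := congrArg Fin.val (hsi hw)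
      simpa [Fin.last, hjF] using this
    have hjm' : j < m := by
      rcases lt_or_eq_of_le hjm with h | h
      · exact h
      · exfalso
        apply hab'
        rw [← hw, hlast]
        congr 1
        ext
        simp [Fin.last, hjG, h]
    -- step j+1 of t
    set j1 : Fin (m + 1) := ⟨j + 1, by omega⟩ with hj1
    have hGsub : ∀ u ∈ S.filter fun u => ∀ l, l < j1 → u ≠ t l, u = s jF := by
      intro u hu
      obtain ⟨huS, hul⟩ := Finset.mem_filter.mp hu
      have huFs : u ∈ S.filter fun u => ∀ l, l < jF → u ≠ s l := by
        refine Finset.mem_filter.mpr ⟨huS, ?_⟩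
        intro l hl
        rw [hagree l hl]
        refine hul _ (Fin.lt_def.mpr ?_)
        have := Fin.lt_def.mp hl
        simp [hj1]
        omega
      have hub : u ≠ t jG := hul jG (Fin.lt_def.mpr (by simp [hjG, hj1]))
      rcases hFsub _ huFs with h | h
      · exact h
      · exact absurd h hub
    have ht1G : t j1 ∈ S.filter fun u => ∀ l, l < j1 → u ≠ t l := by
      refine Finset.mem_filter.mpr ⟨htm _, ?_⟩
      intro l hl hcon
      have h1 := congrArg Fin.val (hti hcon)
      have h2 : l.1 < j + 1 := Fin.lt_def.mp hl
      simp [hj1] at h1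
      omega
    have ht1a : t j1 = s jF := hGsub _ ht1G
    have hempty : (S.filter fun u => ∀ l, l < j1 → u ≠ t l).erase (t j1) = ∅ := by
      apply Finset.eq_empty_of_forall_notMem
      intro u hu
      obtain ⟨hune, hu'⟩ := Finset.mem_erase.mp hu
      exact hune ((hGsub _ hu').trans ht1a.symm)
    obtain ⟨hden₃, -⟩ := key_ineq hβ (hpos _ (htm j1)).le (ht j1)
    rw [hempty] at hden₃
    simp [hN0] at hden₃
  · -- s (last k) = t jG : forces j = m, hence j = k = m, contradiction
    have hjm' : m = j := by
      have h1 : t (Fin.last m) = t jG := by rw [← hlast, hw]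
      have := congrArg Fin.val (hti h1)
      simpa [Fin.last, hjG] using this
    have hjk' : k = j := le_antisymm (by omega) hjK
    apply hab'
    rw [← hw]
    congr 1
    ext
    simp [Fin.last, hjF, hjk']

/-- Disjointness of SIC cells: two distinct ordered cancellation tuples, neither a
prefix of the other, both ending with the same station, have disjoint SIC reception
regions (uniform powers, `β ≥ 1`). -/
theorem stmt14 {d k m : ℕ} (S : Finset (EuclideanSpace ℝ (Fin d)))
    (s : Fin (k + 1) → EuclideanSpace ℝ (Fin d))
    (t : Fin (m + 1) → EuclideanSpace ℝ (Fin d))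
    (hsm : ∀ j, s j ∈ S) (htm : ∀ j, t j ∈ S)
    (hsi : Function.Injective s) (hti : Function.Injective t)
    (hlast : s (Fin.last k) = t (Fin.last m))
    (hnp₁ : ∀ h : k ≤ m, ∃ j : Fin (k + 1),
      s j ≠ t (Fin.castLE (Nat.succ_le_succ h) j))
    (hnp₂ : ∀ h : m ≤ k, ∃ j : Fin (m + 1),
      t j ≠ s (Fin.castLE (Nat.succ_le_succ h) j))
    (N α β : ℝ) (hN : 0 ≤ N) (hα : 0 < α) (hβ : 1 ≤ β) :
    sicRegion S s N α β ∩ sicRegion S t N α β = ∅ := by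
  ext p
  simp only [Set.mem_inter_iff, Set.mem_empty_iff_false, iff_false, not_and]
  intro hp₁ hp₂
  rcases le_total k m with h | h
  · exact sic_aux S s t hsm htm hsi hti hlast h (hnp₁ h) hN hα hβ p hp₁ hp₂
  · exact sic_aux S t s htm hsm hti hsi hlast.symm h (hnp₂ h) hN hα hβ p hp₂ hp₁
end
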